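/- For positive reals 0 < λ₁ < λ₂ < ⋯ < λₙ and nonnegative integers k₁ < k₂ < ⋯ < kₙ, the generalized Vandermonde determinant det[λᵢ^{kⱼ}]_{i,j=1..n} is strictly positive. -/

import Mathlib

open Finset

/-- An "exponential polynomial" with `m` terms that vanishes at `m` distinct positive
points has all coefficients zero. -/
lemma exp_poly_coeffs_zero : ∀ (m : ℕ) (k : Fin m → ℕ), StrictMono k →
    ∀ (c x : Fin m → ℝ), (∀ i, 0 < x i) → StrictMono x →
    (∀ i, ∑ j, c j * x i ^ k j = 0) → ∀ j, c j = 0 := by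
  intro m
  induction m with
  | zero => intro _ _ _ _ _ _ _ j; exact j.elim0
  | succ m ih =>
    intro k hk c x hxpos hxmono hroot
    set f : ℝ → ℝ := fun t => ∑ j, c j * t ^ (k j - k 0) with hf
    set f' : ℝ → ℝ := fun t => ∑ j : Fin (m+1), c j * (↑(k j - k 0) * t ^ (k j - k 0 - 1)) with hf'
    have hder : ∀ t : ℝ, HasDerivAt f (f' t) t := by
      intro t
      exact HasDerivAt.fun_sum fun j _ => (hasDerivAt_pow (k j - k 0) t).const_mul (c j)
    have hfroot : ∀ i, f (x i) = 0 := by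
      intro i
      have h1 : x i ^ (k 0) * f (x i) = ∑ j, c j * x i ^ k j := by
        rw [hf, Finset.mul_sum]
        refine Finset.sum_congr rfl fun j _ => ?_
        rw [mul_left_comm, ← pow_add, Nat.add_sub_cancel' (hk.monotone (Fin.zero_le j))]
      have h2 : x i ^ (k 0) * f (x i) = 0 := by rw [h1, hroot i]
      have h3 : (x i : ℝ) ^ (k 0) ≠ 0 := pow_ne_zero _ (hxpos i).ne'
      exact (mul_eq_zero.mp h2).resolve_left h3
    -- Rolle between consecutive roots
    have hy : ∀ i : Fin m, ∃ y ∈ Set.Ioo (x i.castSucc) (x i.succ), f' y = 0 := by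
      intro i
      refine exists_hasDerivAt_eq_zero (f := f) (f' := f') (hxmono (Fin.castSucc_lt_succ (i := i))) ?_ ?_ ?_
      · exact (Continuous.continuousOn (by continuity))
      · rw [hfroot, hfroot]
      · intro t _; exact hder t
    choose y hymem hyroot using hy
    have hc' : ∀ j : Fin m, c j.succ * ↑(k j.succ - k 0) = 0 := by
      refine ih (fun j => k j.succ - k 0 - 1) ?_ (fun j => c j.succ * ↑(k j.succ - k 0)) y
        (fun i => lt_trans (hxpos _) (hymem i).1) ?_ ?_
      · intro a b hab
        have h1 : k 0 + 1 ≤ k a.succ := hk (Fin.succ_pos a)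
        show k a.succ - k 0 - 1 < k b.succ - k 0 - 1
        rw [Nat.sub_sub, Nat.sub_sub]
        exact Nat.sub_lt_sub_right h1 (hk (Fin.succ_lt_succ_iff.mpr hab))
      · intro a b hab
        calc y a < x a.succ := (hymem a).2
          _ ≤ x b.castSucc := hxmono.monotone (Fin.succ_le_castSucc_iff.mpr hab)
          _ < y b := (hymem b).1
      · intro i
        have h0 : ∑ j : Fin (m+1), c j * (↑(k j - k 0) * y i ^ (k j - k 0 - 1)) = 0 := hyroot i
        rw [Fin.sum_univ_succ] at h0
        simp only [Nat.sub_self, Nat.cast_zero, zero_mul, mul_zero, zero_add] at h0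
        rw [← h0]
        exact Finset.sum_congr rfl fun j _ => by ring
    have hcs : ∀ j : Fin m, c j.succ = 0 := by
      intro j
      have hne : (↑(k j.succ - k 0) : ℝ) ≠ 0 := by
        have : 0 < k j.succ - k 0 := Nat.sub_pos_of_lt (hk (Fin.succ_pos j))
        exact_mod_cast this.ne'
      exact (mul_eq_zero.mp (hc' j)).resolve_right hne
    have hc0 : c 0 = 0 := by
      have h0 := hroot 0
      rw [Fin.sum_univ_succ] at h0
      simp only [hcs, zero_mul, Finset.sum_const_zero, add_zero] at h0
      exact (mul_eq_zero.mp h0).resolve_right (pow_ne_zero _ (hxpos 0).ne')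
    intro j
    rcases Fin.eq_zero_or_eq_succ j with rfl | ⟨j', rfl⟩
    · exact hc0
    · exact hcs j'

lemma gen_vandermonde_det_pos_aux : ∀ (n : ℕ) (l : Fin n → ℝ), (∀ i, 0 < l i) → StrictMono l →
    ∀ (k : Fin n → ℕ), StrictMono k → 0 < Matrix.det (Matrix.of fun i j : Fin n => l i ^ k j) := by
  intro n
  induction n with
  | zero => intro l _ _ k _; simp [Matrix.det_fin_zero]
  | succ n ih =>
    intro l hpos hlmono k hkmono
    rcases Nat.eq_zero_or_pos n with rfl | hn1
    · simpa [Matrix.det_fin_one] using pow_pos (hpos 0) (k 0)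
    set L : Fin (n+1) := Fin.last n with hL
    set M : Matrix (Fin (n+1)) (Fin (n+1)) ℝ := Matrix.of fun i j : Fin (n+1) => l i ^ k j with hM
    set D : Fin (n+1) → ℝ := fun j => (M.submatrix Fin.castSucc j.succAbove).det with hD
    set c : Fin (n+1) → ℝ := fun j => (-1 : ℝ) ^ (n + (j : ℕ)) * D j with hc
    set g : ℝ → ℝ := fun x => ∑ j, c j * x ^ k j with hg
    -- determinant with last row replaced by powers of x equals g x
    have hgdet : ∀ x : ℝ, (M.updateRow L fun j => x ^ k j).det = g x := by
      intro x
      rw [Matrix.det_succ_row _ L]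
      refine Finset.sum_congr rfl fun j _ => ?_
      have hsub : (M.updateRow L fun j => x ^ k j).submatrix L.succAbove j.succAbove
          = M.submatrix Fin.castSucc j.succAbove := by
        ext a b
        rw [hL, Fin.succAbove_last]
        simp [Matrix.updateRow_apply, (Fin.castSucc_lt_last a).ne]
      rw [hsub, Matrix.updateRow_self]
      show (-1:ℝ) ^ ((L:ℕ) + (j:ℕ)) * x ^ k j * D j = c j * x ^ k j
      rw [hc]
      simp only [hL, Fin.val_last]
      ring
    have hcL : c L = D L := by
      rw [hc]
      simp only [hL, Fin.val_last]
      rw [Even.neg_one_pow ⟨n, rfl⟩, one_mul]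
    have hDL : 0 < D L := by
      have := ih (fun i => l i.castSucc) (fun i => hpos _)
        (fun a b hab => hlmono (Fin.castSucc_lt_castSucc_iff.mpr hab))
        (fun j => k j.castSucc) (fun a b hab => hkmono (Fin.castSucc_lt_castSucc_iff.mpr hab))
      have hsub : (M.submatrix Fin.castSucc L.succAbove)
          = Matrix.of (fun i j : Fin n =>
            (fun i : Fin n => l i.castSucc) i ^ (fun j : Fin n => k j.castSucc) j) := by
        ext a b
        simp [hL, Fin.succAbove_last, hM]
      show 0 < (M.submatrix Fin.castSucc L.succAbove).det
      rw [hsub]; exact this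
    have hcLpos : 0 < c L := hcL ▸ hDL
    have hroot : ∀ i : Fin n, g (l i.castSucc) = 0 := by
      intro i
      rw [← hgdet]
      refine Matrix.det_zero_of_row_eq (i := i.castSucc) (j := L) (Fin.castSucc_lt_last i).ne ?_
      funext b
      simp [Matrix.updateRow_apply, (Fin.castSucc_lt_last i).ne, hM]
    have hcontg : Continuous g :=
      continuous_finset_sum _ fun j _ => continuous_const.mul (continuous_pow (k j))
    -- K = k L ≥ 1
    have hK1 : 1 ≤ k L := by
      have h0L : (0 : Fin (n+1)) < L := by
        rw [hL, Fin.lt_iff_val_lt_val]; simpa using hn1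
      have : k 0 < k L := hkmono h0L
      omega
    set S : ℝ := ∑ j, |c j| with hS
    set x₀ : ℝ := max (max 1 (l L + 1)) ((S + 1) / c L) with hx₀
    have hx₀1 : (1:ℝ) ≤ x₀ := le_trans (le_max_left _ _) (le_max_left _ _)
    have hx₀L : l L < x₀ := lt_of_lt_of_le (lt_add_one _) (le_trans (le_max_right _ _) (le_max_left _ _))
    have hcLx₀ : S + 1 ≤ c L * x₀ := by
      have h1 : (S + 1) / c L ≤ x₀ := le_max_right _ _
      calc S + 1 = c L * ((S + 1) / c L) := (mul_div_cancel₀ _ hcLpos.ne').symm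
        _ ≤ c L * x₀ := by exact mul_le_mul_of_nonneg_left h1 hcLpos.le
    have hgx₀ : 0 < g x₀ := by
      have hx₀pos : (0:ℝ) < x₀ := lt_of_lt_of_le one_pos hx₀1
      have hsplit : g x₀ = c L * x₀ ^ k L + ∑ j ∈ univ.erase L, c j * x₀ ^ k j := by
        rw [hg]
        exact (Finset.add_sum_erase univ (fun j => c j * x₀ ^ k j) (mem_univ L)).symm
      have hbound : ∀ j ∈ univ.erase L, -( |c j| * x₀ ^ (k L - 1)) ≤ c j * x₀ ^ k j := by
        intro j hj
        have hjL : j ≠ L := (Finset.mem_erase.mp hj).1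
        have hjlt : k j ≤ k L - 1 :=
          Nat.le_sub_one_of_lt (hkmono (lt_of_le_of_ne (Fin.le_last j) hjL))
        have hple : x₀ ^ k j ≤ x₀ ^ (k L - 1) := pow_le_pow_right₀ hx₀1 hjlt
        calc -( |c j| * x₀ ^ (k L - 1)) ≤ -( |c j| * x₀ ^ k j) := by
              exact neg_le_neg (mul_le_mul_of_nonneg_left hple (abs_nonneg _))
          _ ≤ c j * x₀ ^ k j := by
              have := neg_abs_le (c j)
              nlinarith [pow_pos hx₀pos (k j)]
      have hsum : -(S * x₀ ^ (k L - 1)) ≤ ∑ j ∈ univ.erase L, c j * x₀ ^ k j := by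
        calc -(S * x₀ ^ (k L - 1)) ≤ -((∑ j ∈ univ.erase L, |c j|) * x₀ ^ (k L - 1)) := by
              refine neg_le_neg (mul_le_mul_of_nonneg_right ?_ (pow_pos hx₀pos _).le)
              exact Finset.sum_le_sum_of_subset_of_nonneg (Finset.erase_subset _ _)
                (fun j _ _ => abs_nonneg _)
          _ = ∑ j ∈ univ.erase L, -( |c j| * x₀ ^ (k L - 1)) := by
              rw [Finset.sum_mul, ← Finset.sum_neg_distrib]
          _ ≤ _ := Finset.sum_le_sum hbound
      have hpowK : x₀ ^ k L = x₀ ^ (k L - 1) * x₀ := by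
        rw [← pow_succ, Nat.sub_add_cancel hK1]
      have hfin : 0 < c L * x₀ ^ k L - S * x₀ ^ (k L - 1) := by
        have hp := pow_pos hx₀pos (k L - 1)
        rw [hpowK]
        nlinarith [mul_le_mul_of_nonneg_right hcLx₀ hp.le]
      rw [hsplit]; linarith
    -- main positivity
    have hdetg : M.det = g (l L) := by
      rw [← hgdet (l L)]
      congr 1
      exact (Matrix.updateRow_eq_self M L).symm
    have hglL : 0 < g (l L) := by
      rcases lt_trichotomy (g (l L)) 0 with hlt | heq | hgt
      · -- IVT gives a root above l L; contradiction with root count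
        exfalso
        have h0mem : (0:ℝ) ∈ Set.Ioo (g (l L)) (g x₀) := ⟨hlt, hgx₀⟩
        obtain ⟨y, hymem, hyroot⟩ := intermediate_value_Ioo hx₀L.le hcontg.continuousOn h0mem
        set X : Fin (n+1) → ℝ := Fin.snoc (fun i : Fin n => l i.castSucc) y with hXdef
        have hXlast : X (Fin.last n) = y := Fin.snoc_last _ _
        have hXcast : ∀ i : Fin n, X i.castSucc = l i.castSucc := fun i => Fin.snoc_castSucc _ _ _
        have hlLy : l L < y := hymem.1
        have hXpos : ∀ i, 0 < X i := by
          intro i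
          induction i using Fin.lastCases with
          | last => rw [hXlast]; exact lt_trans (hpos L) hlLy
          | cast i => rw [hXcast]; exact hpos _
        have hXmono : StrictMono X := by
          intro a b hab
          induction b using Fin.lastCases with
          | last =>
            obtain ⟨a', rfl⟩ := Fin.exists_castSucc_eq.mpr (ne_of_lt hab)
            rw [hXcast, hXlast]
            exact lt_trans (hlmono (Fin.castSucc_lt_last a')) hlLy
          | cast b' =>
            obtain ⟨a', rfl⟩ := Fin.exists_castSucc_eq.mpr
              (ne_of_lt (lt_trans hab (Fin.castSucc_lt_last b')))
            rw [hXcast, hXcast]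
            exact hlmono (Fin.castSucc_lt_castSucc_iff.mp hab)
        have hXroot : ∀ i, ∑ j, c j * X i ^ k j = 0 := by
          intro i
          induction i using Fin.lastCases with
          | last => rw [hXlast]; exact hyroot
          | cast i => rw [hXcast]; exact hroot i
        exact hcLpos.ne' (exp_poly_coeffs_zero (n+1) k hkmono c X hXpos hXmono hXroot L)
      · exfalso
        have hcz : ∀ j, c j = 0 := by
          refine exp_poly_coeffs_zero (n+1) k hkmono c l hpos hlmono ?_
          intro i
          induction i using Fin.lastCases with
          | last => exact heq
          | cast i => exact hroot i
        exact hcLpos.ne' (hcz L)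
      · exact hgt
    rw [hM] at hdetg
    rw [hdetg]; exact hglL

theorem generalized_vandermonde_det_pos (n : ℕ) (hn : 1 ≤ n)
    (l : Fin n → ℝ) (hpos : ∀ i, 0 < l i) (hlmono : StrictMono l)
    (k : Fin n → ℕ) (hkmono : StrictMono k) :
    0 < Matrix.det (Matrix.of fun i j : Fin n => l i ^ k j) :=
  gen_vandermonde_det_pos_aux n l hpos hlmono k hkmono
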